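/- If A is a Lagrangian (order-n subgroup) of (Z/nZ)² and (A,B) is a tiling pair, then (A,B) is also a symplectic spectral pair: |A| = |B| and ΔB ⊆ Z(1̂_A^{sym}), so that {e^{2πi⟨a,b⟩_s/n}}_{b∈B} is an orthogonal basis of functions on A. -/

import Mathlib

open Complex
open scoped Classical

abbrev G (n : ℕ) := ZMod n × ZMod n

def symp {n : ℕ} (x y : G n) : ZMod n := x.1 * y.2 - x.2 * y.1

lemma exists_symp_ne_zero {n : ℕ} [NeZero n] (A : AddSubgroup (G n)) (hA : Nat.card A = n)
    {ξ : G n} (hξ : ξ ∉ A) : ∃ a ∈ A, symp a ξ ≠ 0 := by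
  by_contra hcon
  push_neg at hcon
  apply hξ
  -- the projection ℤ × ℤ → (ZMod n)²
  set π : ℤ × ℤ →+ G n := (Int.castAddHom (ZMod n)).prodMap (Int.castAddHom (ZMod n)) with hπ
  have hπ_apply : ∀ x : ℤ × ℤ, π x = ((x.1 : ZMod n), (x.2 : ZMod n)) := fun x => rfl
  have hπs : Function.Surjective π := by
    intro g
    obtain ⟨x, hx⟩ := ZMod.intCast_surjective (n := n) g.1
    obtain ⟨y, hy⟩ := ZMod.intCast_surjective (n := n) g.2
    exact ⟨(x, y), by simp [hπ_apply, hx, hy]⟩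
  set L : AddSubgroup (ℤ × ℤ) := A.comap π with hL
  -- card of the quotient
  have hQ : Nat.card ((ℤ × ℤ) ⧸ L) = n := by
    set φ : ℤ × ℤ →+ G n ⧸ A := (QuotientAddGroup.mk' A).comp π with hφ
    have hφs : Function.Surjective φ := (QuotientAddGroup.mk'_surjective A).comp hπs
    have hker : φ.ker = L := by
      ext x
      simp [hφ, AddMonoidHom.mem_ker, hL, QuotientAddGroup.eq_zero_iff]
    have e := ((QuotientAddGroup.quotientAddEquivOfEq hker.symm).trans
      (QuotientAddGroup.quotientKerEquivOfSurjective φ hφs))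
    have h1 : Nat.card ((ℤ × ℤ) ⧸ L) = Nat.card (G n ⧸ A) := Nat.card_congr e.toEquiv
    have h2 : Nat.card (G n) = Nat.card (G n ⧸ A) * Nat.card A :=
      AddSubgroup.card_eq_card_quotient_mul_card_addSubgroup A
    have h3 : Nat.card (G n) = n * n := by simp [Nat.card_prod, Nat.card_zmod]
    rw [h3, hA] at h2
    rw [h1]
    exact (Nat.eq_of_mul_eq_mul_right (Nat.pos_of_ne_zero (NeZero.ne n)) h2.symm)
  -- n-torsion is in L
  have hnL : ∀ x : ℤ × ℤ, (n : ℤ) ∣ x.1 → (n : ℤ) ∣ x.2 → x ∈ L := by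
    intro x h1 h2
    have : π x = 0 := by
      rw [hπ_apply]
      ext <;> simp [ZMod.intCast_zmod_eq_zero_iff_dvd, h1, h2]
    have : π x ∈ A := by rw [this]; exact zero_mem A
    exact this
  -- d₁ : generator of the first projection of L
  obtain ⟨a1, ha1⟩ := Int.subgroup_cyclic (L.map (AddMonoidHom.fst ℤ ℤ))
  set d1 : ℕ := a1.natAbs with hd1def
  have hmem1 : ∀ x : ℤ, x ∈ L.map (AddMonoidHom.fst ℤ ℤ) ↔ (d1 : ℤ) ∣ x := by
    intro x
    rw [ha1, AddSubgroup.mem_closure_singleton]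
    constructor
    · rintro ⟨k, rfl⟩
      exact Int.natAbs_dvd.mpr (by rw [zsmul_eq_mul]; exact dvd_mul_left a1 k)
    · intro h
      obtain ⟨c, rfl⟩ := Int.natAbs_dvd.mp h
      exact ⟨c, by rw [zsmul_eq_mul]; push_cast; ring⟩
  have hLd1 : ∀ x : ℤ × ℤ, x ∈ L → (d1 : ℤ) ∣ x.1 := by
    intro x hx
    exact (hmem1 x.1).mp ⟨x, hx, rfl⟩
  -- u ∈ L with first coordinate d1
  have hu : ∃ u : ℤ × ℤ, u ∈ L ∧ u.1 = (d1 : ℤ) := by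
    have : (d1 : ℤ) ∈ L.map (AddMonoidHom.fst ℤ ℤ) := (hmem1 _).mpr dvd_rfl
    obtain ⟨u, hu, hu1⟩ := this
    exact ⟨u, hu, hu1⟩
  obtain ⟨u, huL, hu1⟩ := hu
  -- d₂ : generator of the second fiber
  obtain ⟨a2, ha2⟩ := Int.subgroup_cyclic (L.comap (AddMonoidHom.inr ℤ ℤ))
  set d2 : ℕ := a2.natAbs with hd2def
  have hmem2 : ∀ y : ℤ, ((0 : ℤ), y) ∈ L ↔ (d2 : ℤ) ∣ y := by
    intro y
    have : ((0 : ℤ), y) ∈ L ↔ y ∈ L.comap (AddMonoidHom.inr ℤ ℤ) := Iff.rfl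
    rw [this, ha2, AddSubgroup.mem_closure_singleton]
    constructor
    · rintro ⟨k, rfl⟩
      exact Int.natAbs_dvd.mpr (by rw [zsmul_eq_mul]; exact dvd_mul_left a2 k)
    · intro h
      obtain ⟨c, rfl⟩ := Int.natAbs_dvd.mp h
      exact ⟨c, by rw [zsmul_eq_mul]; push_cast; ring⟩
  have hwL : ((0 : ℤ), (d2 : ℤ)) ∈ L := (hmem2 _).mpr dvd_rfl
  -- d1, d2 are nonzero
  have hd1n : (d1 : ℤ) ∣ (n : ℤ) := hLd1 ((n : ℤ), 0) (hnL _ dvd_rfl (dvd_zero _))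
  have hd2n : (d2 : ℤ) ∣ (n : ℤ) := (hmem2 _).mp (hnL _ (dvd_zero _) dvd_rfl)
  have hnne : (n : ℤ) ≠ 0 := Int.natCast_ne_zero.mpr (NeZero.ne n)
  have hd1pos : 0 < (d1 : ℤ) := by
    rcases Nat.eq_zero_or_pos d1 with h | h
    · exfalso; apply hnne; simpa [h] using hd1n
    · exact_mod_cast h
  have hd2pos : 0 < (d2 : ℤ) := by
    rcases Nat.eq_zero_or_pos d2 with h | h
    · exfalso; apply hnne; simpa [h] using hd2n
    · exact_mod_cast h
  -- membership characterization of L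
  have hmemL : ∀ x : ℤ × ℤ, x ∈ L ↔
      ∃ α β : ℤ, x = (α * d1, α * u.2 + β * d2) := by
    intro x
    constructor
    · intro hx
      obtain ⟨α, hα⟩ := hLd1 x hx
      have hsub : x - α • u ∈ L := AddSubgroup.sub_mem L hx (AddSubgroup.zsmul_mem L huL α)
      have hx1 : (x - α • u).1 = 0 := by
        simp [hu1, hα, mul_comm]
      have heq : x - α • u = ((0 : ℤ), x.2 - α * u.2) := by
        ext
        · exact hx1
        · simp [mul_comm]
      rw [heq] at hsub
      obtain ⟨β, hβ⟩ := (hmem2 _).mp hsub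
      refine ⟨α, β, ?_⟩
      ext
      · rw [hα]; ring
      · simp only
        linear_combination hβ
    · rintro ⟨α, β, rfl⟩
      have : (α * (d1 : ℤ), α * u.2 + β * d2) = α • u + β • ((0 : ℤ), (d2 : ℤ)) := by
        ext <;> simp [hu1, mul_comm] <;> ring
      rw [this]
      exact AddSubgroup.add_mem L (AddSubgroup.zsmul_mem L huL α)
        (AddSubgroup.zsmul_mem L hwL β)
  have hd1posN : 0 < d1 := by exact_mod_cast hd1pos
  have hd2posN : 0 < d2 := by exact_mod_cast hd2pos
  -- counting: n = d1 * d2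
  have hcard : n = d1 * d2 := by
    have hf : Function.Bijective (fun p : Fin d1 × Fin d2 =>
        (QuotientAddGroup.mk ((((p.1 : ℕ) : ℤ)), (((p.2 : ℕ) : ℤ))) : (ℤ × ℤ) ⧸ L)) := by
      constructor
      · rintro ⟨i, j⟩ ⟨i', j'⟩ hij
        simp only at hij
        rw [QuotientAddGroup.eq] at hij
        have hii : (d1 : ℤ) ∣ (-((i : ℕ) : ℤ) + ((i' : ℕ) : ℤ)) := by
          have := hLd1 _ hij; simpa using this
        have hi1 := i.isLt; have hi2 := i'.isLt
        have hii0 : -((i : ℕ) : ℤ) + ((i' : ℕ) : ℤ) = 0 :=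
          Int.eq_zero_of_dvd_of_natAbs_lt_natAbs hii (by omega)
        have hieq : i = i' := by
          apply Fin.ext; omega
        subst hieq
        have hij2 : ((0 : ℤ), -((j : ℕ) : ℤ) + ((j' : ℕ) : ℤ)) ∈ L := by
          have heq : ((0 : ℤ), -((j : ℕ) : ℤ) + ((j' : ℕ) : ℤ)) =
              -((((i : ℕ) : ℤ)), (((j : ℕ) : ℤ))) + ((((i : ℕ) : ℤ)), (((j' : ℕ) : ℤ))) := by
            ext <;> simp
          rw [heq]; exact hij
        have hjj : (d2 : ℤ) ∣ (-((j : ℕ) : ℤ) + ((j' : ℕ) : ℤ)) := (hmem2 _).mp hij2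
        have hj1 := j.isLt; have hj2 := j'.isLt
        have hjj0 : -((j : ℕ) : ℤ) + ((j' : ℕ) : ℤ) = 0 :=
          Int.eq_zero_of_dvd_of_natAbs_lt_natAbs hjj (by omega)
        have : j = j' := by apply Fin.ext; omega
        rw [this]
      · intro q
        obtain ⟨x, rfl⟩ := QuotientAddGroup.mk_surjective q
        have hd1ne : (d1 : ℤ) ≠ 0 := ne_of_gt hd1pos
        have hd2ne : (d2 : ℤ) ≠ 0 := ne_of_gt hd2pos
        set r : ℤ := x.1 % (d1 : ℤ) with hr
        set y : ℤ := x.2 - (x.1 / (d1 : ℤ)) * u.2 with hy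
        set s : ℤ := y % (d2 : ℤ) with hs
        have hr0 : 0 ≤ r := Int.emod_nonneg x.1 hd1ne
        have hr1 : r < d1 := Int.emod_lt_of_pos x.1 hd1pos
        have hs0 : 0 ≤ s := Int.emod_nonneg y hd2ne
        have hs1 : s < d2 := Int.emod_lt_of_pos y hd2pos
        refine ⟨(⟨r.toNat, by omega⟩, ⟨s.toNat, by omega⟩), ?_⟩
        simp only
        rw [QuotientAddGroup.eq]
        refine (hmemL _).mpr ⟨x.1 / (d1 : ℤ), y / (d2 : ℤ), ?_⟩
        have e1 := Int.mul_ediv_add_emod x.1 (d1 : ℤ)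
        have e2 := Int.mul_ediv_add_emod y (d2 : ℤ)
        have htr : (r.toNat : ℤ) = r := Int.toNat_of_nonneg hr0
        have hts : (s.toNat : ℤ) = s := Int.toNat_of_nonneg hs0
        ext
        · show -(r.toNat : ℤ) + x.1 = x.1 / (d1 : ℤ) * d1
          rw [htr]; linear_combination -e1
        · show -(s.toNat : ℤ) + x.2 = x.1 / (d1 : ℤ) * u.2 + y / (d2 : ℤ) * d2
          rw [hts]; linear_combination -e2
    have := Nat.card_eq_of_bijective _ hf
    rw [Nat.card_prod, Nat.card_eq_fintype_card, Nat.card_eq_fintype_card,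
      Fintype.card_fin, Fintype.card_fin, hQ] at this
    exact this.symm
  -- conclude: lift ξ and show it lies in L
  set z : ℤ × ℤ := ((ξ.1.val : ℤ), (ξ.2.val : ℤ)) with hzdef
  have hz : π z = ξ := by
    rw [hπ_apply]
    ext <;> push_cast <;> simp [hzdef, ZMod.natCast_zmod_val]
  have hdet : ∀ x ∈ L, (n : ℤ) ∣ (x.1 * z.2 - x.2 * z.1) := by
    intro x hx
    have hxA : π x ∈ A := hx
    have h0 := hcon _ hxA
    unfold symp at h0
    rw [hπ_apply] at h0
    rw [← hz, hπ_apply] at h0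
    have : (((x.1 * z.2 - x.2 * z.1 : ℤ)) : ZMod n) = 0 := by push_cast; push_cast at h0; linear_combination h0
    exact (ZMod.intCast_zmod_eq_zero_iff_dvd _ n).mp this
  have hncast : (n : ℤ) = (d1 : ℤ) * d2 := by exact_mod_cast hcard
  -- first coordinate
  have hw : (d1 : ℤ) * d2 ∣ (d2 : ℤ) * z.1 := by
    have h := hdet _ hwL
    rw [hncast] at h
    have heq : ((0 : ℤ), (d2 : ℤ)).1 * z.2 - ((0 : ℤ), (d2 : ℤ)).2 * z.1
        = -((d2 : ℤ) * z.1) := by simp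
    rw [heq, dvd_neg] at h
    exact h
  have hda : (d1 : ℤ) ∣ z.1 := by
    have h2 : ((d2 : ℤ) * d1) ∣ ((d2 : ℤ) * z.1) := by rwa [mul_comm (d1 : ℤ) d2] at hw
    exact (mul_dvd_mul_iff_left (ne_of_gt hd2pos)).mp h2
  obtain ⟨α, hα⟩ := hda
  have hub : (d1 : ℤ) * d2 ∣ (d1 : ℤ) * (z.2 - u.2 * α) := by
    have h := hdet _ huL
    rw [hncast, hu1, hα] at h
    have heq : (d1 : ℤ) * z.2 - u.2 * ((d1 : ℤ) * α) = (d1 : ℤ) * (z.2 - u.2 * α) := by ring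
    rwa [heq] at h
  have hdb : (d2 : ℤ) ∣ (z.2 - u.2 * α) :=
    (mul_dvd_mul_iff_left (ne_of_gt hd1pos)).mp hub
  obtain ⟨β, hβ⟩ := hdb
  have hzL : z ∈ L := by
    refine (hmemL z).mpr ⟨α, β, ?_⟩
    ext
    · show z.1 = α * d1
      rw [hα]; ring
    · show z.2 = α * u.2 + β * d2
      linear_combination hβ
  have : π z ∈ A := hzL
  rwa [hz] at this

/-- Symplectic Fourier transform of the indicator of a subgroup `A` at `ξ`. -/
noncomputable def sFsub {n : ℕ} [NeZero n] (A : AddSubgroup (G n)) (ξ : G n) : ℂ :=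
  ∑ a : A, Complex.exp (2 * Real.pi * Complex.I * ((symp (a : G n) ξ).val : ℂ) / (n : ℂ))

lemma symp_add_left {n : ℕ} (x y ξ : G n) : symp (x + y) ξ = symp x ξ + symp y ξ := by
  unfold symp
  simp only [Prod.fst_add, Prod.snd_add]
  ring

lemma sFsub_eq_zero {n : ℕ} [NeZero n] (A : AddSubgroup (G n)) {ξ : G n}
    {a₀ : G n} (ha₀ : a₀ ∈ A) (hs : symp a₀ ξ ≠ 0) : sFsub A ξ = 0 := by
  classical
  have hnne : (n : ℂ) ≠ 0 := Nat.cast_ne_zero.mpr (NeZero.ne n)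
  set c : ZMod n → ℂ := fun t => Complex.exp (2 * Real.pi * Complex.I * (t.val : ℂ) / n) with hc
  have hchar : ∀ s t : ZMod n, c (s + t) = c s * c t := by
    intro s t
    have h1 : (s + t).val + n * ((s.val + t.val) / n) = s.val + t.val := by
      rw [ZMod.val_add]; exact Nat.mod_add_div _ _
    have h2 : ((s.val : ℂ)) + (t.val : ℂ) = (((s + t).val : ℂ)) +
        (n : ℂ) * (((s.val + t.val) / n : ℕ) : ℂ) := by exact_mod_cast h1.symm
    rw [hc]
    simp only
    rw [← Complex.exp_add]
    have hk := Complex.exp_int_mul_two_pi_mul_I ((((s.val + t.val) / n : ℕ) : ℤ))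
    calc Complex.exp (2 * Real.pi * Complex.I * (((s + t).val : ℕ) : ℂ) / n)
        = Complex.exp (2 * Real.pi * Complex.I * (((s + t).val : ℕ) : ℂ) / n) *
            Complex.exp (((((s.val + t.val) / n : ℕ) : ℤ) : ℂ) * (2 * Real.pi * Complex.I)) := by
          rw [hk, mul_one]
      _ = Complex.exp (2 * Real.pi * Complex.I * ((s.val : ℂ)) / n +
            2 * Real.pi * Complex.I * ((t.val : ℂ)) / n) := by
          rw [← Complex.exp_add]
          congr 1
          rw [Int.cast_natCast, div_add' _ _ _ hnne, ← add_div,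
            div_eq_div_iff hnne hnne]
          linear_combination (-2 * (Real.pi : ℂ) * Complex.I * (n : ℂ)) * h2
  set S := ∑ a : A, c (symp (a : G n) ξ) with hS
  have hSF : sFsub A ξ = S := rfl
  have hstep : S = c (symp a₀ ξ) * S := by
    rw [hS, Finset.mul_sum]
    refine Fintype.sum_bijective (Equiv.addLeft (-(⟨a₀, ha₀⟩ : A))) (Equiv.bijective _) _ _ ?_
    intro a
    have hcoe : (((Equiv.addLeft (-(⟨a₀, ha₀⟩ : A))) a : A) : G n) = -a₀ + (a : G n) := rfl
    rw [hcoe, ← hchar, ← symp_add_left, add_neg_cancel_left]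
  have hcne : c (symp a₀ ξ) ≠ 1 := by
    intro h1
    set v : ℕ := (symp a₀ ξ).val with hv
    have hv0 : v ≠ 0 := by
      intro h0
      exact hs (by rwa [← ZMod.val_eq_zero])
    have hvlt : v < n := ZMod.val_lt _
    rw [hc] at h1
    simp only at h1
    obtain ⟨k, hk⟩ := Complex.exp_eq_one_iff.mp h1
    have hPI : (2 * (Real.pi : ℂ) * Complex.I) ≠ 0 := by
      simp [Real.pi_ne_zero, Complex.I_ne_zero]
    have hvc : ((v : ℂ)) = (k : ℂ) * n := by
      rw [div_eq_iff hnne] at hk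
      have h2 : 2 * (Real.pi : ℂ) * Complex.I * v = 2 * (Real.pi : ℂ) * Complex.I * (k * n) := by
        linear_combination hk
      exact mul_left_cancel₀ hPI h2
    have hvz : (v : ℤ) = k * n := by exact_mod_cast hvc
    have hdvd : ((n : ℤ)) ∣ (v : ℤ) := ⟨k, by rw [hvz]; ring⟩
    have := Int.eq_zero_of_dvd_of_natAbs_lt_natAbs hdvd (by omega)
    omega
  have hzero : (c (symp a₀ ξ) - 1) * S = 0 := by linear_combination -hstep
  rcases mul_eq_zero.mp hzero with h | h
  · exact absurd (by linear_combination h) hcne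
  · rw [hSF, h]

def IsTilingPairSub {n : ℕ} (A : AddSubgroup (G n)) (B : Finset (G n)) : Prop :=
  ∀ g : G n, ∃! q : G n × G n, (q.1 ∈ A ∧ q.2 ∈ B) ∧ q.1 + q.2 = g

/-- If `A` is a Lagrangian (order-`n` subgroup) of `(Z/nZ)²` and `(A,B)` is a tiling pair,
then `(A,B)` is a symplectic spectral pair: `|A| = |B|` and `ΔB ⊆ Z(1̂_A^{sym})`. -/
theorem stmt16 {n : ℕ} [NeZero n] (A : AddSubgroup (G n)) (hA : Nat.card A = n)
    (B : Finset (G n)) (hT : IsTilingPairSub A B) :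
    Nat.card A = B.card ∧ ∀ b ∈ B, ∀ b' ∈ B, b ≠ b' → sFsub A (b - b') = 0 := by
  classical
  have hBcard : B.card = n := by
    have hbij : Function.Bijective
        (fun p : A × {x // x ∈ B} => (p.1 : G n) + (p.2 : G n)) := by
      constructor
      · rintro ⟨⟨a, ha⟩, ⟨b, hb⟩⟩ ⟨⟨a', ha'⟩, ⟨b', hb'⟩⟩ h
        simp only at h
        obtain ⟨q, hq, huniq⟩ := hT (a + b)
        have e1 := huniq (a, b) ⟨⟨ha, hb⟩, rfl⟩
        have e2 := huniq (a', b') ⟨⟨ha', hb'⟩, h.symm⟩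
        have e3 : ((a : G n), b) = ((a' : G n), b') := e1.trans e2.symm
        obtain ⟨h1', h2'⟩ := Prod.ext_iff.mp e3
        exact Prod.ext_iff.mpr ⟨Subtype.ext h1', Subtype.ext h2'⟩
      · intro g
        obtain ⟨q, ⟨⟨h1, h2⟩, h3⟩, _⟩ := hT g
        exact ⟨(⟨q.1, h1⟩, ⟨q.2, h2⟩), h3⟩
    have hcards := Nat.card_eq_of_bijective _ hbij
    rw [Nat.card_prod, hA] at hcards
    have hG : Nat.card (G n) = n * n := by simp [Nat.card_prod, Nat.card_zmod]
    rw [hG] at hcards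
    have hBc : Nat.card {x // x ∈ B} = B.card := by
      rw [Nat.card_eq_fintype_card, Fintype.card_coe]
    rw [hBc] at hcards
    exact Nat.eq_of_mul_eq_mul_left (Nat.pos_of_ne_zero (NeZero.ne n)) hcards
  refine ⟨by rw [hA, hBcard], ?_⟩
  intro b hb b' hb' hne
  have hnotin : b - b' ∉ A := by
    intro hmem
    obtain ⟨q, hq, huniq⟩ := hT b
    have e1 := huniq (b - b', b') ⟨⟨hmem, hb'⟩, by simp⟩
    have e2 := huniq (0, b) ⟨⟨zero_mem A, hb⟩, by simp⟩
    have e3 : ((b - b' : G n), b') = ((0 : G n), b) := e1.trans e2.symm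
    have h0 : b - b' = 0 := (Prod.ext_iff.mp e3).1
    exact hne (sub_eq_zero.mp h0)
  obtain ⟨a₀, ha₀, hs⟩ := exists_symp_ne_zero A hA hnotin
  exact sFsub_eq_zero A ha₀ hs
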